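/- arXiv:2503.15280 — 4 statements merged into one kernel-verified Lean document; each statement's English description precedes it below -/
import Mathlib

section
/- Let C be a self-adjoint nonnegative operator in a Hilbert space H, let A be a linear operator with D(C) ⊆ D(A) and ‖A u‖² ≤ K(‖u‖² + ‖C u‖²) for all u ∈ D(C), and let B be a densely defined operator with D(C) ⊆ D(B*). Let x, y be sequences with x(n), y(n) ∈ D(C), ∑ₙ(‖x(n)‖² + ‖C x(n)‖²) < ∞ and ∑ₙ(‖y(n)‖² + ‖C y(n)‖²) < ∞, and set ρ = ∑ₙ |x(n)⟩⟨y(n)|. Then A ρ B (defined on D(B)) has a unique bounded extension equal to ∑ₙ |A x(n)⟩⟨B* y(n)|, and this extension is trace class. -/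
open Filter Topology
open scoped ENNReal NNReal

variable {H : Type*} [NormedAddCommGroup H] [InnerProductSpace ℂ H] [CompleteSpace H]

/-- The rank-one operator `|φ⟩⟨ψ| : ξ ↦ ⟪ψ, ξ⟫ φ`. -/
noncomputable def rankOne (φ ψ : H) : H →L[ℂ] H := (innerSL ℂ ψ).smulRight φ

/-- The trace norm, via its variational characterization as the supremum over finite
orthonormal families `(e_k)`, `(f_k)` of `∑ₖ |⟪e_k, A f_k⟫|`; it is finite exactly for
trace-class operators `A`. -/
noncomputable def traceNorm (A : H →L[ℂ] H) : ℝ≥0∞ :=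
  ⨆ (n : ℕ) (e : Fin n → H) (f : Fin n → H) (_ : Orthonormal ℂ e) (_ : Orthonormal ℂ f),
    ∑ k, (‖(inner ℂ (e k) (A (f k)) : ℂ)‖₊ : ℝ≥0∞)

set_option linter.unusedSectionVars false





local notation "⟪" x ", " y "⟫" => @inner ℂ _ _ x y

theorem aux_adjoint_graph_isClosed (B : H →ₗ.[ℂ] H) (hB : Dense (B.domain : Set H)) :
    IsClosed (B.adjoint.graph : Set (H × H)) := by
  have hset : (B.adjoint.graph : Set (H × H)) =
      ⋂ z : B.domain, {p : H × H | ⟪p.1, B z⟫ = ⟪p.2, (z : H)⟫} := by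
    ext p
    simp only [Set.mem_iInter, Set.mem_setOf_eq, SetLike.mem_coe, LinearPMap.mem_graph_iff]
    constructor
    · rintro ⟨u, hu1, hu2⟩ z
      rw [← hu1, ← hu2]
      exact ((B.adjoint_isFormalAdjoint hB) u z).symm
    · intro h
      have hm : p.1 ∈ B.adjoint.domain :=
        LinearPMap.mem_adjoint_domain_of_exists _ ⟨p.2, fun z => (h z).symm⟩
      refine ⟨⟨p.1, hm⟩, rfl, ?_⟩
      exact LinearPMap.adjoint_apply_eq hB _ fun z => (h z).symm
  rw [hset]
  refine isClosed_iInter fun z => isClosed_eq ?_ ?_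
  · exact (continuous_fst.inner continuous_const)
  · exact (continuous_snd.inner continuous_const)
theorem aux_graph_fst_mem {C : H →ₗ.[ℂ] H} {p : H × H} (h : p ∈ C.graph) :
    p.1 ∈ C.domain := by
  rcases C.mem_graph_iff.mp h with ⟨u, hu1, -⟩
  exact hu1 ▸ u.2

theorem aux_graph_val {C : H →ₗ.[ℂ] H} {p : H × H} (h : p ∈ C.graph) :
    C ⟨p.1, aux_graph_fst_mem h⟩ = p.2 := by
  rcases C.mem_graph_iff.mp h with ⟨u, hu1, hu2⟩
  have : (⟨p.1, aux_graph_fst_mem h⟩ : C.domain) = u := Subtype.ext hu1.symm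
  rw [this, hu2]

/-- A linear map on the graph of `C`, given a map on `C.domain`. -/
noncomputable def auxGraphMap (C D : H →ₗ.[ℂ] H) (hdom : C.domain ≤ D.domain) :
    C.graph →ₗ[ℂ] H where
  toFun g := D ⟨(g : H × H).1, hdom (aux_graph_fst_mem g.2)⟩
  map_add' g h := by
    have := D.map_add (⟨(g : H × H).1, hdom (aux_graph_fst_mem g.2)⟩ : D.domain)
      (⟨(h : H × H).1, hdom (aux_graph_fst_mem h.2)⟩ : D.domain)
    convert this using 2 <;> rfl
  map_smul' c g := by
    have := D.map_smul c (⟨(g : H × H).1, hdom (aux_graph_fst_mem g.2)⟩ : D.domain)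
    convert this using 2 <;> rfl


theorem aux_adjoint_rel_bound (C B : H →ₗ.[ℂ] H) (hC : IsClosed (C.graph : Set (H × H)))
    (hB : Dense (B.domain : Set H)) (hdom : C.domain ≤ B.adjoint.domain) :
    ∃ K : ℝ, 0 ≤ K ∧
      ∀ u : C.domain, ‖B.adjoint ⟨(u : H), hdom u.2⟩‖ ^ 2 ≤ K * (‖(u : H)‖ ^ 2 + ‖C u‖ ^ 2) := by
  haveI : CompleteSpace C.graph := hC.completeSpace_coe
  have hgraph : ((auxGraphMap C B.adjoint hdom).graph : Set (C.graph × H)) =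
      (fun p : C.graph × H => (((p.1 : H × H)).1, p.2)) ⁻¹' (B.adjoint.graph : Set (H × H)) := by
    ext p
    simp only [SetLike.mem_coe, LinearMap.mem_graph_iff, Set.mem_preimage]
    constructor
    · intro h
      rw [h]
      exact B.adjoint.mem_graph
        (⟨((p.1 : H × H)).1, hdom (aux_graph_fst_mem p.1.2)⟩ : B.adjoint.domain)
    · intro h
      exact (aux_graph_val h).symm
  have hclosed : IsClosed ((auxGraphMap C B.adjoint hdom).graph : Set (C.graph × H)) := by
    rw [hgraph]
    exact (aux_adjoint_graph_isClosed B hB).preimage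
      (((continuous_subtype_val.comp continuous_fst).fst).prodMk continuous_snd)
  refine ⟨‖ContinuousLinearMap.ofIsClosedGraph hclosed‖ ^ 2, sq_nonneg _, fun u => ?_⟩
  have h2 : ContinuousLinearMap.ofIsClosedGraph hclosed ⟨((u : H), C u), C.mem_graph u⟩
      = B.adjoint ⟨(u : H), hdom u.2⟩ := by
    rw [ContinuousLinearMap.coeFn_ofIsClosedGraph]
    rfl
  have h1 : ‖B.adjoint ⟨(u : H), hdom u.2⟩‖
      ≤ ‖ContinuousLinearMap.ofIsClosedGraph hclosed‖
        * ‖(⟨((u : H), C u), C.mem_graph u⟩ : C.graph)‖ := by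
    rw [← h2]; exact ContinuousLinearMap.le_opNorm _ _
  have h3 : ‖(⟨((u : H), C u), C.mem_graph u⟩ : C.graph)‖ ^ 2 ≤ ‖(u : H)‖ ^ 2 + ‖C u‖ ^ 2 := by
    have he : ‖(⟨((u : H), C u), C.mem_graph u⟩ : C.graph)‖ = max ‖(u : H)‖ ‖C u‖ := by
      rw [show ‖(⟨((u : H), C u), C.mem_graph u⟩ : C.graph)‖ = ‖((u : H), C u)‖ from rfl,
        Prod.norm_def]
    rw [he]
    rcases max_cases ‖(u : H)‖ ‖C u‖ with ⟨h, -⟩ | ⟨h, -⟩ <;> rw [h] <;>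
      nlinarith [sq_nonneg ‖(u : H)‖, sq_nonneg ‖C u‖]
  calc ‖B.adjoint ⟨(u : H), hdom u.2⟩‖ ^ 2
      ≤ (‖ContinuousLinearMap.ofIsClosedGraph hclosed‖
          * ‖(⟨((u : H), C u), C.mem_graph u⟩ : C.graph)‖) ^ 2 := by
        have := norm_nonneg (B.adjoint ⟨(u : H), hdom u.2⟩)
        nlinarith
    _ = ‖ContinuousLinearMap.ofIsClosedGraph hclosed‖ ^ 2
          * ‖(⟨((u : H), C u), C.mem_graph u⟩ : C.graph)‖ ^ 2 := by ring
    _ ≤ _ := mul_le_mul_of_nonneg_left h3 (sq_nonneg _)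

/-- Let `C` be a self-adjoint nonnegative operator, `A` a linear operator relatively
bounded with respect to `C`, and `B` a densely defined operator with `D(C) ⊆ D(B*)`.
If `x(n), y(n) ∈ D(C)` with `∑ₙ (‖x(n)‖² + ‖C x(n)‖²) < ∞`,
`∑ₙ (‖y(n)‖² + ‖C y(n)‖²) < ∞`, and `ρ = ∑ₙ |x(n)⟩⟨y(n)|`, then `A ρ B` (defined on
`D(B)`) has a unique bounded extension, which equals `∑ₙ |A x(n)⟩⟨B* y(n)|` and is trace
class. -/
theorem stmt_5 [TopologicalSpace.SeparableSpace H]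
    (C : H →ₗ.[ℂ] H)
    (hsa : IsSelfAdjoint C)
    (hnn : ∀ u : C.domain, 0 ≤ (inner ℂ ((u : H)) (C u) : ℂ).re)
    (A : H →ₗ.[ℂ] H) (hAdom : C.domain ≤ A.domain) (K : ℝ)
    (hAb : ∀ u : C.domain, ‖A ⟨(u : H), hAdom u.2⟩‖ ^ 2 ≤ K * (‖(u : H)‖ ^ 2 + ‖C u‖ ^ 2))
    (B : H →ₗ.[ℂ] H) (hBdense : Dense (B.domain : Set H))
    (hBdom : C.domain ≤ B.adjoint.domain)
    (x y : ℕ → H) (hxd : ∀ n, x n ∈ C.domain) (hyd : ∀ n, y n ∈ C.domain)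
    (hx : Summable fun n => ‖x n‖ ^ 2 + ‖C ⟨x n, hxd n⟩‖ ^ 2)
    (hy : Summable fun n => ‖y n‖ ^ 2 + ‖C ⟨y n, hyd n⟩‖ ^ 2)
    (ρ : H →L[ℂ] H) (hρ : HasSum (fun n => rankOne (x n) (y n)) ρ) :
    ∃ T : H →L[ℂ] H,
      (∀ z : B.domain, (ρ (B z), T (z : H)) ∈ A.graph) ∧
      (∀ T' : H →L[ℂ] H, (∀ z : B.domain, (ρ (B z), T' (z : H)) ∈ A.graph) → T' = T) ∧
      HasSum (fun n =>
        rankOne (A ⟨x n, hAdom (hxd n)⟩) (B.adjoint ⟨y n, hBdom (hyd n)⟩)) T ∧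
      traceNorm T ≠ ⊤ := by
  classical
  have hCeq : C.adjoint = C := hsa
  have hCdense : Dense (C.domain : Set H) := hsa.dense_domain
  have hCclosed : IsClosed (C.graph : Set (H × H)) := by
    rw [← hCeq]; exact aux_adjoint_graph_isClosed C hCdense
  obtain ⟨KB, hKB0, hKB⟩ := aux_adjoint_rel_bound C B hCclosed hBdense hBdom
  -- summability of the pieces
  have hCx2 : Summable (fun n => ‖C ⟨x n, hxd n⟩‖ ^ 2) :=
    Summable.of_nonneg_of_le (fun n => sq_nonneg _)
      (fun n => le_add_of_nonneg_left (sq_nonneg _)) hx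
  have hA2 : Summable (fun n => ‖A ⟨x n, hAdom (hxd n)⟩‖ ^ 2) :=
    Summable.of_nonneg_of_le (fun n => sq_nonneg _) (fun n => hAb ⟨x n, hxd n⟩) (hx.mul_left K)
  have hB2 : Summable (fun n => ‖B.adjoint ⟨y n, hBdom (hyd n)⟩‖ ^ 2) :=
    Summable.of_nonneg_of_le (fun n => sq_nonneg _) (fun n => hKB ⟨y n, hyd n⟩) (hy.mul_left KB)
  have hl2l1 : ∀ (a b : ℕ → ℝ), Summable (fun n => a n ^ 2) → Summable (fun n => b n ^ 2) →
      (∀ n, 0 ≤ a n) → (∀ n, 0 ≤ b n) → Summable (fun n => a n * b n) := by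
    intro a b ha hb ha0 hb0
    refine Summable.of_nonneg_of_le (fun n => mul_nonneg (ha0 n) (hb0 n)) (fun n => ?_)
      ((ha.add hb).div_const 2)
    have := two_mul_le_add_sq (a n) (b n)
    linarith
  have hprod : Summable (fun n =>
      ‖A ⟨x n, hAdom (hxd n)⟩‖ * ‖B.adjoint ⟨y n, hBdom (hyd n)⟩‖) :=
    hl2l1 _ _ hA2 hB2 (fun n => norm_nonneg _) (fun n => norm_nonneg _)
  have hrkn : ∀ n, ‖rankOne (A ⟨x n, hAdom (hxd n)⟩) (B.adjoint ⟨y n, hBdom (hyd n)⟩)‖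
      = ‖A ⟨x n, hAdom (hxd n)⟩‖ * ‖B.adjoint ⟨y n, hBdom (hyd n)⟩‖ := fun n => by
    rw [rankOne, ContinuousLinearMap.norm_smulRight_apply, innerSL_apply_norm, mul_comm]
  have hTsummable : Summable (fun n =>
      rankOne (A ⟨x n, hAdom (hxd n)⟩) (B.adjoint ⟨y n, hBdom (hyd n)⟩)) :=
    Summable.of_norm_bounded hprod (fun n => (hrkn n).le)
  obtain ⟨T, hTsum⟩ := hTsummable
  -- the bounded operator on the graph of `C` induced by `A`
  have hbound : ∀ g : C.graph,
      ‖auxGraphMap C A hAdom g‖ ≤ Real.sqrt (2 * max K 0) * ‖g‖ := by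
    intro g
    set u : C.domain := ⟨(g : H × H).1, aux_graph_fst_mem g.2⟩ with hu
    have h1 : ‖auxGraphMap C A hAdom g‖ ^ 2 ≤ max K 0 * (‖(u : H)‖ ^ 2 + ‖C u‖ ^ 2) := by
      refine le_trans (hAb u) ?_
      have : (0:ℝ) ≤ ‖(u : H)‖ ^ 2 + ‖C u‖ ^ 2 := by positivity
      exact mul_le_mul_of_nonneg_right (le_max_left _ _) this
    have hCu : C u = (g : H × H).2 := aux_graph_val g.2
    have hg1 : ‖(u : H)‖ ≤ ‖g‖ := by
      have : ‖g‖ = max ‖(g : H × H).1‖ ‖(g : H × H).2‖ := by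
        rw [show ‖g‖ = ‖(g : H × H)‖ from rfl, Prod.norm_def]
      rw [this]; exact le_max_left _ _
    have hg2 : ‖C u‖ ≤ ‖g‖ := by
      have : ‖g‖ = max ‖(g : H × H).1‖ ‖(g : H × H).2‖ := by
        rw [show ‖g‖ = ‖(g : H × H)‖ from rfl, Prod.norm_def]
      rw [this, hCu]; exact le_max_right _ _
    have h2 : ‖auxGraphMap C A hAdom g‖ ^ 2 ≤ (2 * max K 0) * ‖g‖ ^ 2 := by
      have hK0 : (0:ℝ) ≤ max K 0 := le_max_right _ _
      have hu2 : ‖(u : H)‖ ^ 2 ≤ ‖g‖ ^ 2 := by nlinarith [norm_nonneg (u : H), norm_nonneg g]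
      have hcu2 : ‖C u‖ ^ 2 ≤ ‖g‖ ^ 2 := by nlinarith [norm_nonneg (C u), norm_nonneg g]
      nlinarith [mul_le_mul_of_nonneg_left hu2 hK0, mul_le_mul_of_nonneg_left hcu2 hK0]
    have h3 : ‖auxGraphMap C A hAdom g‖
        ≤ Real.sqrt ((2 * max K 0) * ‖g‖ ^ 2) := by
      rw [← Real.sqrt_sq (norm_nonneg (auxGraphMap C A hAdom g))]
      exact Real.sqrt_le_sqrt h2
    calc ‖auxGraphMap C A hAdom g‖ ≤ Real.sqrt ((2 * max K 0) * ‖g‖ ^ 2) := h3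
      _ = Real.sqrt (2 * max K 0) * ‖g‖ := by
          rw [Real.sqrt_mul (by positivity) (‖g‖ ^ 2), Real.sqrt_sq (norm_nonneg g)]
  -- key graph property, proved for arbitrary bounded T'' satisfying nothing: we prove it for T
  have key : ∀ z : B.domain, (ρ (B z), T (z : H)) ∈ A.graph := by
    intro z
    have hadj : ∀ n, (inner ℂ ((B.adjoint ⟨y n, hBdom (hyd n)⟩ : H)) ((z : H)) : ℂ)
        = inner ℂ (y n) (B z) := fun n =>
      (B.adjoint_isFormalAdjoint hBdense) ⟨y n, hBdom (hyd n)⟩ z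
    have h1 : HasSum (fun n => (inner ℂ (y n) (B z) : ℂ) • x n) (ρ (B z)) := by
      have := hρ.mapL (ContinuousLinearMap.apply ℂ H (B z))
      simpa [rankOne] using this
    have hTz : HasSum (fun n => (inner ℂ (y n) (B z) : ℂ) • A ⟨x n, hAdom (hxd n)⟩)
        (T (z : H)) := by
      have := hTsum.mapL (ContinuousLinearMap.apply ℂ H (z : H))
      simp only [ContinuousLinearMap.apply_apply] at this
      have heq : (fun n => rankOne (A ⟨x n, hAdom (hxd n)⟩)
          (B.adjoint ⟨y n, hBdom (hyd n)⟩) (z : H))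
          = fun n => (inner ℂ (y n) (B z) : ℂ) • A ⟨x n, hAdom (hxd n)⟩ := by
        funext n
        rw [rankOne, ContinuousLinearMap.smulRight_apply, innerSL_apply_apply, hadj n]
      rwa [heq] at this
    have hcn : ∀ n, ‖(inner ℂ (y n) (B z) : ℂ)‖
        ≤ ‖B.adjoint ⟨y n, hBdom (hyd n)⟩‖ * ‖(z : H)‖ := by
      intro n
      rw [← hadj n]
      exact norm_inner_le_norm _ _
    have hs2 : Summable (fun n => (inner ℂ (y n) (B z) : ℂ) • C ⟨x n, hxd n⟩) := by
      refine Summable.of_norm_bounded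
        (g := fun n => ‖(z : H)‖ * (‖B.adjoint ⟨y n, hBdom (hyd n)⟩‖ * ‖C ⟨x n, hxd n⟩‖))
        (Summable.mul_left _ (hl2l1 _ _ hB2 hCx2 (fun n => norm_nonneg _)
          (fun n => norm_nonneg _))) (fun n => ?_)
      rw [norm_smul]
      calc ‖(inner ℂ (y n) (B z) : ℂ)‖ * ‖C ⟨x n, hxd n⟩‖
          ≤ (‖B.adjoint ⟨y n, hBdom (hyd n)⟩‖ * ‖(z : H)‖) * ‖C ⟨x n, hxd n⟩‖ :=
            mul_le_mul_of_nonneg_right (hcn n) (norm_nonneg _)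
        _ = ‖(z : H)‖ * (‖B.adjoint ⟨y n, hBdom (hyd n)⟩‖ * ‖C ⟨x n, hxd n⟩‖) := by ring
    obtain ⟨w, hw⟩ := hs2
    have h3 : HasSum (fun n => (inner ℂ (y n) (B z) : ℂ) • ((x n, C ⟨x n, hxd n⟩) : H × H))
        (ρ (B z), w) := h1.prodMk hw
    have hmemgraph : ((ρ (B z), w) : H × H) ∈ C.graph := by
      refine hCclosed.mem_of_tendsto h3 (Filter.Eventually.of_forall fun s => ?_)
      exact Submodule.sum_mem _ fun n _ =>
        Submodule.smul_mem _ _ (C.mem_graph ⟨x n, hxd n⟩)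
    have hmem : ρ (B z) ∈ C.domain := aux_graph_fst_mem hmemgraph
    -- HasSum inside the graph
    have hG : HasSum (fun n => ((inner ℂ (y n) (B z) : ℂ) •
          (⟨(x n, C ⟨x n, hxd n⟩), C.mem_graph ⟨x n, hxd n⟩⟩ : C.graph) : C.graph))
        (⟨(ρ (B z), w), hmemgraph⟩ : C.graph) := by
      rw [HasSum]
      apply tendsto_subtype_rng.mpr
      have hco : ∀ s : Finset ℕ, ((∑ n ∈ s, ((inner ℂ (y n) (B z) : ℂ) •
          (⟨(x n, C ⟨x n, hxd n⟩), C.mem_graph ⟨x n, hxd n⟩⟩ : C.graph)) : C.graph) : H × H)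
          = ∑ n ∈ s, (inner ℂ (y n) (B z) : ℂ) • ((x n, C ⟨x n, hxd n⟩) : H × H) := by
        intro s
        push_cast
        rfl
      simp only [hco]
      exact h3
    set ΦA := LinearMap.mkContinuous (auxGraphMap C A hAdom) (Real.sqrt (2 * max K 0)) hbound
      with hΦA
    have hAρ : HasSum (fun n => (inner ℂ (y n) (B z) : ℂ) • A ⟨x n, hAdom (hxd n)⟩)
        (ΦA ⟨(ρ (B z), w), hmemgraph⟩) := by
      have := hG.mapL ΦA
      have heq : (fun n => ΦA ((inner ℂ (y n) (B z) : ℂ) •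
          (⟨(x n, C ⟨x n, hxd n⟩), C.mem_graph ⟨x n, hxd n⟩⟩ : C.graph)))
          = fun n => (inner ℂ (y n) (B z) : ℂ) • A ⟨x n, hAdom (hxd n)⟩ := by
        funext n
        rw [map_smul]
        congr 1
      rwa [heq] at this
    have hval : ΦA ⟨(ρ (B z), w), hmemgraph⟩ = A ⟨ρ (B z), hAdom hmem⟩ := rfl
    have hfin : A ⟨ρ (B z), hAdom hmem⟩ = T (z : H) := by
      rw [← hval]
      exact (hAρ.unique hTz)
    exact A.mem_graph_iff.mpr ⟨⟨ρ (B z), hAdom hmem⟩, rfl, hfin⟩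
  refine ⟨T, key, ?_, hTsum, ?_⟩
  · -- uniqueness
    intro T' hT'
    have heqon : Set.EqOn (⇑T') (⇑T) (B.domain : Set H) := by
      intro z hz
      obtain ⟨u, hu1, hu2⟩ := A.mem_graph_iff.mp (hT' ⟨z, hz⟩)
      obtain ⟨v, hv1, hv2⟩ := A.mem_graph_iff.mp (key ⟨z, hz⟩)
      have huv : u = v := Subtype.ext (by rw [hu1, hv1])
      simp only at hu2 hv2
      rw [← hu2, huv, hv2]
    exact ContinuousLinearMap.coeFn_injective
      (Continuous.ext_on hBdense T'.continuous T.continuous heqon)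
  · -- trace norm
    have hTN : traceNorm T ≤ ENNReal.ofReal (∑' n,
        ‖A ⟨x n, hAdom (hxd n)⟩‖ * ‖B.adjoint ⟨y n, hBdom (hyd n)⟩‖) := by
      rw [traceNorm]
      refine iSup_le fun m => iSup_le fun e => iSup_le fun f => iSup_le fun he =>
        iSup_le fun hf => ?_
      have hk : ∀ k : Fin m, HasSum (fun n =>
          (inner ℂ ((B.adjoint ⟨y n, hBdom (hyd n)⟩ : H)) (f k) : ℂ)
            * (inner ℂ (e k) ((A ⟨x n, hAdom (hxd n)⟩ : H)) : ℂ))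
          (inner ℂ (e k) (T (f k))) := by
        intro k
        have := (hTsum.mapL (ContinuousLinearMap.apply ℂ H (f k))).mapL (innerSL ℂ (e k))
        simp only [ContinuousLinearMap.apply_apply, innerSL_apply_apply] at this
        have heq : (fun n => (inner ℂ (e k) (rankOne (A ⟨x n, hAdom (hxd n)⟩)
            (B.adjoint ⟨y n, hBdom (hyd n)⟩) (f k)) : ℂ))
            = fun n => (inner ℂ ((B.adjoint ⟨y n, hBdom (hyd n)⟩ : H)) (f k) : ℂ)
              * (inner ℂ (e k) ((A ⟨x n, hAdom (hxd n)⟩ : H)) : ℂ) := by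
          funext n
          rw [rankOne, ContinuousLinearMap.smulRight_apply, innerSL_apply_apply, inner_smul_right]
        rwa [heq] at this
      have hnsum : ∀ k : Fin m, Summable (fun n =>
          ‖(inner ℂ ((B.adjoint ⟨y n, hBdom (hyd n)⟩ : H)) (f k) : ℂ)‖
            * ‖(inner ℂ (e k) ((A ⟨x n, hAdom (hxd n)⟩ : H)) : ℂ)‖) := by
        intro k
        refine Summable.of_nonneg_of_le (fun n => mul_nonneg (norm_nonneg _) (norm_nonneg _))
          (fun n => ?_) ((hprod.mul_left (‖f k‖ * ‖e k‖)))
        calc ‖(inner ℂ ((B.adjoint ⟨y n, hBdom (hyd n)⟩ : H)) (f k) : ℂ)‖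
              * ‖(inner ℂ (e k) ((A ⟨x n, hAdom (hxd n)⟩ : H)) : ℂ)‖
            ≤ (‖B.adjoint ⟨y n, hBdom (hyd n)⟩‖ * ‖f k‖) * (‖e k‖ * ‖A ⟨x n, hAdom (hxd n)⟩‖) :=
              mul_le_mul (norm_inner_le_norm _ _) (norm_inner_le_norm _ _)
                (norm_nonneg _) (by positivity)
          _ = ‖f k‖ * ‖e k‖ * (‖A ⟨x n, hAdom (hxd n)⟩‖ * ‖B.adjoint ⟨y n, hBdom (hyd n)⟩‖) := by
              ring
      have hterm : ∀ k : Fin m, ‖(inner ℂ (e k) (T (f k)) : ℂ)‖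
          ≤ ∑' n, ‖(inner ℂ ((B.adjoint ⟨y n, hBdom (hyd n)⟩ : H)) (f k) : ℂ)‖
            * ‖(inner ℂ (e k) ((A ⟨x n, hAdom (hxd n)⟩ : H)) : ℂ)‖ := by
        intro k
        rw [← (hk k).tsum_eq]
        refine le_trans (norm_tsum_le_tsum_norm ?_) (le_of_eq (tsum_congr fun n => norm_mul _ _))
        simpa only [norm_mul] using hnsum k
      have hbessel : ∀ n, ∑ k : Fin m,
          ‖(inner ℂ ((B.adjoint ⟨y n, hBdom (hyd n)⟩ : H)) (f k) : ℂ)‖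
            * ‖(inner ℂ (e k) ((A ⟨x n, hAdom (hxd n)⟩ : H)) : ℂ)‖
          ≤ ‖A ⟨x n, hAdom (hxd n)⟩‖ * ‖B.adjoint ⟨y n, hBdom (hyd n)⟩‖ := by
        intro n
        set F : Fin m → ℝ := fun k =>
          ‖(inner ℂ ((B.adjoint ⟨y n, hBdom (hyd n)⟩ : H)) (f k) : ℂ)‖ with hF
        set G : Fin m → ℝ := fun k => ‖(inner ℂ (e k) ((A ⟨x n, hAdom (hxd n)⟩ : H)) : ℂ)‖ with hG
        have hFsq : ∑ k, F k ^ 2 ≤ ‖B.adjoint ⟨y n, hBdom (hyd n)⟩‖ ^ 2 := by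
          have := hf.sum_inner_products_le (s := Finset.univ)
            ((B.adjoint ⟨y n, hBdom (hyd n)⟩ : H))
          refine le_trans (le_of_eq ?_) this
          refine Finset.sum_congr rfl fun k _ => ?_
          rw [hF]
          simp only
          rw [← norm_inner_symm]
        have hGsq : ∑ k, G k ^ 2 ≤ ‖A ⟨x n, hAdom (hxd n)⟩‖ ^ 2 :=
          he.sum_inner_products_le ((A ⟨x n, hAdom (hxd n)⟩ : H))
        have hcs : (∑ k, F k * G k) ^ 2 ≤ (∑ k, F k ^ 2) * ∑ k, G k ^ 2 :=
          Finset.sum_mul_sq_le_sq_mul_sq _ _ _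
        have h0 : (0:ℝ) ≤ ∑ k, F k * G k :=
          Finset.sum_nonneg fun k _ => mul_nonneg (norm_nonneg _) (norm_nonneg _)
        have hF0 : (0:ℝ) ≤ ∑ k, F k ^ 2 := Finset.sum_nonneg fun k _ => sq_nonneg _
        have hG0 : (0:ℝ) ≤ ∑ k, G k ^ 2 := Finset.sum_nonneg fun k _ => sq_nonneg _
        have h4 : (∑ k, F k ^ 2) * ∑ k, G k ^ 2
            ≤ ‖B.adjoint ⟨y n, hBdom (hyd n)⟩‖ ^ 2 * ‖A ⟨x n, hAdom (hxd n)⟩‖ ^ 2 :=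
          mul_le_mul hFsq hGsq hG0 (sq_nonneg _)
        have h5 : (∑ k, F k * G k) ^ 2
            ≤ (‖A ⟨x n, hAdom (hxd n)⟩‖ * ‖B.adjoint ⟨y n, hBdom (hyd n)⟩‖) ^ 2 := by
          nlinarith
        have h6 : (0:ℝ) ≤ ‖A ⟨x n, hAdom (hxd n)⟩‖ * ‖B.adjoint ⟨y n, hBdom (hyd n)⟩‖ := by
          positivity
        nlinarith [h5, h0, h6]
      have hreal : ∑ k : Fin m, ‖(inner ℂ (e k) (T (f k)) : ℂ)‖
          ≤ ∑' n, ‖A ⟨x n, hAdom (hxd n)⟩‖ * ‖B.adjoint ⟨y n, hBdom (hyd n)⟩‖ := by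
        calc ∑ k : Fin m, ‖(inner ℂ (e k) (T (f k)) : ℂ)‖
            ≤ ∑ k : Fin m, ∑' n,
              ‖(inner ℂ ((B.adjoint ⟨y n, hBdom (hyd n)⟩ : H)) (f k) : ℂ)‖
                * ‖(inner ℂ (e k) ((A ⟨x n, hAdom (hxd n)⟩ : H)) : ℂ)‖ :=
              Finset.sum_le_sum fun k _ => hterm k
          _ = ∑' n, ∑ k : Fin m,
              ‖(inner ℂ ((B.adjoint ⟨y n, hBdom (hyd n)⟩ : H)) (f k) : ℂ)‖
                * ‖(inner ℂ (e k) ((A ⟨x n, hAdom (hxd n)⟩ : H)) : ℂ)‖ :=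
              (Summable.tsum_finsetSum fun k _ => hnsum k).symm
          _ ≤ ∑' n, ‖A ⟨x n, hAdom (hxd n)⟩‖ * ‖B.adjoint ⟨y n, hBdom (hyd n)⟩‖ := by
              refine Summable.tsum_le_tsum hbessel ?_ hprod
              refine Summable.of_nonneg_of_le (fun n => Finset.sum_nonneg fun k _ =>
                mul_nonneg (norm_nonneg _) (norm_nonneg _)) hbessel hprod
      calc ∑ k : Fin m, (‖(inner ℂ (e k) (T (f k)) : ℂ)‖₊ : ℝ≥0∞)
          = ENNReal.ofReal (∑ k : Fin m, ‖(inner ℂ (e k) (T (f k)) : ℂ)‖) := by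
            rw [ENNReal.ofReal_sum_of_nonneg (fun k _ => norm_nonneg _)]
            exact Finset.sum_congr rfl fun k _ => (ofReal_norm _).symm
        _ ≤ ENNReal.ofReal (∑' n, ‖A ⟨x n, hAdom (hxd n)⟩‖
              * ‖B.adjoint ⟨y n, hBdom (hyd n)⟩‖) := ENNReal.ofReal_le_ofReal hreal
    exact ne_top_of_le_ne_top ENNReal.ofReal_ne_top hTN
end

section
/- Let C be a self-adjoint nonnegative operator in a separable Hilbert space H, (pₙ) nonnegative reals, and (φₙ) unit vectors in D(C) with ∑ₙ pₙ < ∞ and ∑ₙ pₙ ‖C φₙ‖² < ∞; set ρ = ∑ₙ pₙ |φₙ⟩⟨φₙ| (convergent in trace norm). Then the unique bounded extension of C ρ C is trace class and its trace equals ∑ₙ pₙ ‖C φₙ‖². -/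
open Filter Topology
open scoped ENNReal NNReal

variable {H : Type*} [NormedAddCommGroup H] [InnerProductSpace ℂ H] [CompleteSpace H]

lemma rankOne_apply (φ ψ v : H) : rankOne φ ψ v = (inner ℂ ψ v : ℂ) • φ := rfl

lemma norm_rankOne (φ ψ : H) : ‖rankOne φ ψ‖ = ‖ψ‖ * ‖φ‖ := by
  rw [rankOne, ContinuousLinearMap.norm_smulRight_apply, innerSL_apply_norm]

lemma inner_real_smul_right (x : H) (r : ℝ) (w : H) :
    (inner ℂ x (r • w) : ℂ) = r • (inner ℂ x w : ℂ) := by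
  rw [RCLike.real_smul_eq_coe_smul (K := ℂ), inner_smul_right]
  rfl

set_option maxHeartbeats 2000000 in
/-- Let `C` be a self-adjoint nonnegative operator with dense domain, `(pₙ)` nonnegative
reals and `(φₙ)` unit vectors of `D(C)` with `∑ₙ pₙ < ∞` and `∑ₙ pₙ ‖C φₙ‖² < ∞`, and
`ρ = ∑ₙ pₙ |φₙ⟩⟨φₙ|`.  Then `C ρ C` has a unique bounded extension `T`, `T` is trace
class, and its trace (computed in any Hilbert basis) equals `∑ₙ pₙ ‖C φₙ‖²`. -/
theorem stmt_9 [TopologicalSpace.SeparableSpace H] {ι : Type*} (b : HilbertBasis ι ℂ H)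
    (C : H →ₗ.[ℂ] H)
    (hsa : IsSelfAdjoint C)
    (hnn : ∀ u : C.domain, 0 ≤ (inner ℂ ((u : H)) (C u) : ℂ).re)
    (p : ℕ → ℝ) (hp : ∀ n, 0 ≤ p n) (hpsum : Summable p)
    (φ : ℕ → H) (hφd : ∀ n, φ n ∈ C.domain) (hφ : ∀ n, ‖φ n‖ = 1)
    (hC : Summable fun n => p n * ‖C ⟨φ n, hφd n⟩‖ ^ 2)
    (ρ : H →L[ℂ] H) (hρ : HasSum (fun n => p n • rankOne (φ n) (φ n)) ρ) :
    ∃ T : H →L[ℂ] H,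
      (∀ z : C.domain, (ρ (C z), T (z : H)) ∈ C.graph) ∧
      (∀ T' : H →L[ℂ] H, (∀ z : C.domain, (ρ (C z), T' (z : H)) ∈ C.graph) → T' = T) ∧
      traceNorm T ≠ ⊤ ∧
      ∑' i, (inner ℂ (b i) (T (b i)) : ℂ) = ((∑' n, p n * ‖C ⟨φ n, hφd n⟩‖ ^ 2 : ℝ) : ℂ) := by
  classical
  set ψ : ℕ → H := fun n => C ⟨φ n, hφd n⟩ with hψdef
  -- self-adjointness facts
  have hd : Dense (C.domain : Set H) := hsa.dense_domain
  have heq : C.adjoint = C := LinearPMap.isSelfAdjoint_def.mp hsa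
  have hsym : ∀ u v : C.domain, (inner ℂ ((C u : H)) ((v : H)) : ℂ) = inner ℂ ((u:H)) (C v) := by
    have h := LinearPMap.adjoint_isFormalAdjoint (T := C) hd
    rw [heq] at h
    exact h
  -- the candidate operator
  have hnorm : ∀ n, ‖p n • rankOne (ψ n) (ψ n)‖ = p n * ‖ψ n‖ ^ 2 := by
    intro n
    rw [norm_smul, Real.norm_eq_abs, abs_of_nonneg (hp n), norm_rankOne, sq]
  have hSumm : Summable (fun n => p n • rankOne (ψ n) (ψ n)) := by
    refine Summable.of_norm ?_
    exact hC.congr fun n => (hnorm n).symm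
  set T : H →L[ℂ] H := ∑' n, p n • rankOne (ψ n) (ψ n) with hTdef
  have hT : HasSum (fun n => p n • rankOne (ψ n) (ψ n)) T := hSumm.hasSum
  -- evaluations
  have hTap : ∀ v : H,
      HasSum (fun n => p n • ((inner ℂ (ψ n) v : ℂ) • ψ n)) (T v) := by
    intro v
    have := hT.mapL (ContinuousLinearMap.apply ℂ H v)
    simpa [rankOne_apply] using this
  have hρap : ∀ v : H,
      HasSum (fun n => p n • ((inner ℂ (φ n) v : ℂ) • φ n)) (ρ v) := by
    intro v
    have := hρ.mapL (ContinuousLinearMap.apply ℂ H v)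
    simpa [rankOne_apply] using this
  -- inner ℂ products against the sums
  have hTin : ∀ x v : H,
      HasSum (fun n => p n • ((inner ℂ (ψ n) v : ℂ) * (inner ℂ x (ψ n) : ℂ))) (inner ℂ x (T v)) := by
    intro x v
    have := (hTap v).mapL (innerSL ℂ x)
    simpa [inner_real_smul_right, inner_smul_right, mul_comm] using this
  have hρin : ∀ x v : H,
      HasSum (fun n => p n • ((inner ℂ (φ n) v : ℂ) * (inner ℂ x (φ n) : ℂ))) (inner ℂ x (ρ v)) := by
    intro x v
    have := (hρap v).mapL (innerSL ℂ x)
    simpa [inner_real_smul_right, inner_smul_right, mul_comm] using this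
  -- graph membership
  have hgraph : ∀ z : C.domain, (ρ (C z), T (z : H)) ∈ C.graph := by
    intro z
    have key : ∀ x : C.domain, (inner ℂ (T (z : H)) ((x : H)) : ℂ) = inner ℂ (ρ (C z)) (C x) := by
      intro x
      rw [← inner_conj_symm (T (z : H)) ((x : H)), ← inner_conj_symm (ρ (C z)) ((C x : H))]
      congr 1
      have h1 := hTin (x : H) (z : H)
      have h2 := hρin ((C x : H)) (C z)
      refine h1.unique ?_
      refine h2.congr_fun fun n => ?_
      congr 1
      rw [hsym ⟨φ n, hφd n⟩ z, ← hsym x ⟨φ n, hφd n⟩]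
    have hmem : ρ (C z) ∈ C.adjoint.domain :=
      LinearPMap.mem_adjoint_domain_of_exists _ ⟨T (z : H), key⟩
    have happ : C.adjoint ⟨ρ (C z), hmem⟩ = T (z : H) :=
      LinearPMap.adjoint_apply_eq hd _ fun x => key x
    have hg := LinearPMap.mem_graph C.adjoint ⟨ρ (C z), hmem⟩
    rw [happ] at hg
    rwa [show C.adjoint.graph = C.graph from by rw [heq]] at hg
  -- uniqueness
  have huniq : ∀ T' : H →L[ℂ] H,
      (∀ z : C.domain, (ρ (C z), T' (z : H)) ∈ C.graph) → T' = T := by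
    intro T' h'
    refine ContinuousLinearMap.coeFn_injective ?_
    refine Continuous.ext_on hd T'.continuous T.continuous ?_
    intro x hx
    have h1 := h' ⟨x, hx⟩
    have h2 := hgraph ⟨x, hx⟩
    have h3 := C.graph.sub_mem h1 h2
    have h4 : ((0 : H), T' x - T x) ∈ C.graph := by
      simpa [Prod.ext_iff, sub_eq_zero] using h3
    have h5 : T' x - T x = 0 := C.graph_fst_eq_zero_snd h4 rfl
    simpa [sub_eq_zero] using h5
  -- the real bound
  set M : ℝ := ∑' n, p n * ‖ψ n‖ ^ 2 with hMdef
  have hg_le : ∀ (x v : H) (n : ℕ), ‖x‖ ≤ 1 → ‖v‖ ≤ 1 →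
      p n * (‖(inner ℂ x (ψ n) : ℂ)‖ * ‖(inner ℂ (ψ n) v : ℂ)‖) ≤ p n * ‖ψ n‖ ^ 2 := by
    intro x v n hx hv
    have h1 : ‖(inner ℂ x (ψ n) : ℂ)‖ ≤ ‖ψ n‖ := by
      calc ‖(inner ℂ x (ψ n) : ℂ)‖ ≤ ‖x‖ * ‖ψ n‖ := norm_inner_le_norm _ _
        _ ≤ 1 * ‖ψ n‖ := by gcongr
        _ = ‖ψ n‖ := one_mul _
    have h2 : ‖(inner ℂ (ψ n) v : ℂ)‖ ≤ ‖ψ n‖ := by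
      calc ‖(inner ℂ (ψ n) v : ℂ)‖ ≤ ‖ψ n‖ * ‖v‖ := norm_inner_le_norm _ _
        _ ≤ ‖ψ n‖ * 1 := by gcongr
        _ = ‖ψ n‖ := mul_one _
    have := mul_le_mul h1 h2 (norm_nonneg _) (norm_nonneg _)
    calc p n * (‖(inner ℂ x (ψ n) : ℂ)‖ * ‖(inner ℂ (ψ n) v : ℂ)‖)
        ≤ p n * (‖ψ n‖ * ‖ψ n‖) := by
          exact mul_le_mul_of_nonneg_left this (hp n)
      _ = p n * ‖ψ n‖ ^ 2 := by rw [sq]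
  have hnormterm : ∀ (x v : H) (n : ℕ),
      ‖p n • ((inner ℂ (ψ n) v : ℂ) * (inner ℂ x (ψ n) : ℂ))‖
        = p n * (‖(inner ℂ x (ψ n) : ℂ)‖ * ‖(inner ℂ (ψ n) v : ℂ)‖) := by
    intro x v n
    rw [norm_smul, Real.norm_eq_abs, abs_of_nonneg (hp n), norm_mul, mul_comm ‖_‖]
  have hSummIn : ∀ x v : H, ‖x‖ ≤ 1 → ‖v‖ ≤ 1 →
      Summable (fun n => p n * (‖(inner ℂ x (ψ n) : ℂ)‖ * ‖(inner ℂ (ψ n) v : ℂ)‖)) := by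
    intro x v hx hv
    refine Summable.of_nonneg_of_le (fun n => mul_nonneg (hp n) (mul_nonneg (norm_nonneg _) (norm_nonneg _))) (fun n => hg_le x v n hx hv) hC
  have hmain : ∀ (m : ℕ) (e f : Fin m → H), Orthonormal ℂ e → Orthonormal ℂ f →
      ∑ k, ‖(inner ℂ (e k) (T (f k)) : ℂ)‖ ≤ M := by
    intro m e f he hf
    have hek : ∀ k, ‖e k‖ = 1 := fun k => he.1 k
    have hfk : ∀ k, ‖f k‖ = 1 := fun k => hf.1 k
    have step1 : ∀ k, ‖(inner ℂ (e k) (T (f k)) : ℂ)‖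
        ≤ ∑' n, p n * (‖(inner ℂ (e k) (ψ n) : ℂ)‖ * ‖(inner ℂ (ψ n) (f k) : ℂ)‖) := by
      intro k
      have h := hTin (e k) (f k)
      rw [← h.tsum_eq]
      refine (norm_tsum_le_tsum_norm ?_).trans_eq ?_
      · refine (hSummIn (e k) (f k) (by rw [hek k]) (by rw [hfk k])).congr fun n => ?_
        exact (hnormterm (e k) (f k) n).symm
      · exact tsum_congr fun n => hnormterm (e k) (f k) n
    calc ∑ k, ‖(inner ℂ (e k) (T (f k)) : ℂ)‖
        ≤ ∑ k, ∑' n, p n * (‖(inner ℂ (e k) (ψ n) : ℂ)‖ * ‖(inner ℂ (ψ n) (f k) : ℂ)‖) :=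
          Finset.sum_le_sum fun k _ => step1 k
      _ = ∑' n, ∑ k, p n * (‖(inner ℂ (e k) (ψ n) : ℂ)‖ * ‖(inner ℂ (ψ n) (f k) : ℂ)‖) :=
          (Summable.tsum_finsetSum fun k _ => hSummIn (e k) (f k) (by rw [hek k]) (by rw [hfk k])).symm
      _ ≤ ∑' n, p n * ‖ψ n‖ ^ 2 := by
          have hrow : ∀ n, ∑ k, p n * (‖(inner ℂ (e k) (ψ n) : ℂ)‖ * ‖(inner ℂ (ψ n) (f k) : ℂ)‖)
              ≤ p n * ‖ψ n‖ ^ 2 := by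
            intro n
            have hb1 := he.sum_inner_products_le (ψ n) (s := Finset.univ)
            have hb2 := hf.sum_inner_products_le (ψ n) (s := Finset.univ)
            have key : ∀ k : Fin m,
                ‖(inner ℂ (e k) (ψ n) : ℂ)‖ * ‖(inner ℂ (ψ n) (f k) : ℂ)‖
                  ≤ (‖(inner ℂ (e k) (ψ n) : ℂ)‖ ^ 2 + ‖(inner ℂ (f k) (ψ n) : ℂ)‖ ^ 2) / 2 := by
              intro k
              rw [norm_inner_symm (ψ n) (f k)]
              nlinarith [sq_nonneg (‖(inner ℂ (e k) (ψ n) : ℂ)‖ - ‖(inner ℂ (f k) (ψ n) : ℂ)‖)]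
            calc ∑ k, p n * (‖(inner ℂ (e k) (ψ n) : ℂ)‖ * ‖(inner ℂ (ψ n) (f k) : ℂ)‖)
                = p n * ∑ k, ‖(inner ℂ (e k) (ψ n) : ℂ)‖ * ‖(inner ℂ (ψ n) (f k) : ℂ)‖ := by
                  rw [Finset.mul_sum]
              _ ≤ p n * ((‖ψ n‖ ^ 2 + ‖ψ n‖ ^ 2) / 2) := by
                  refine mul_le_mul_of_nonneg_left ?_ (hp n)
                  calc ∑ k, ‖(inner ℂ (e k) (ψ n) : ℂ)‖ * ‖(inner ℂ (ψ n) (f k) : ℂ)‖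
                      ≤ ∑ k, (‖(inner ℂ (e k) (ψ n) : ℂ)‖ ^ 2 + ‖(inner ℂ (f k) (ψ n) : ℂ)‖ ^ 2) / 2 :=
                        Finset.sum_le_sum fun k _ => key k
                    _ = (∑ k, ‖(inner ℂ (e k) (ψ n) : ℂ)‖ ^ 2
                          + ∑ k, ‖(inner ℂ (f k) (ψ n) : ℂ)‖ ^ 2) / 2 := by
                        rw [← Finset.sum_add_distrib, Finset.sum_div]
                    _ ≤ (‖ψ n‖ ^ 2 + ‖ψ n‖ ^ 2) / 2 := by
                        apply div_le_div_of_nonneg_right ?_ ?_ |>.trans_eq rfl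
                        · exact add_le_add hb1 hb2
                        · norm_num
              _ = p n * ‖ψ n‖ ^ 2 := by ring
          exact Summable.tsum_le_tsum hrow
            (Summable.of_nonneg_of_le
              (fun n => Finset.sum_nonneg fun k _ => mul_nonneg (hp n) (mul_nonneg (norm_nonneg _) (norm_nonneg _))) hrow hC) hC
  -- trace norm bound
  have htn : traceNorm T ≤ ENNReal.ofReal M := by
    rw [traceNorm]
    refine iSup_le fun m => iSup_le fun e => iSup_le fun f => iSup_le fun he =>
      iSup_le fun hf => ?_
    have hconv : ∑ k, (‖(inner ℂ (e k) (T (f k)) : ℂ)‖₊ : ℝ≥0∞)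
        = ENNReal.ofReal (∑ k, ‖(inner ℂ (e k) (T (f k)) : ℂ)‖) := by
      rw [ENNReal.ofReal_sum_of_nonneg fun k _ => norm_nonneg _]
      exact Finset.sum_congr rfl fun k _ => (ofReal_norm _).symm
    rw [hconv]
    exact ENNReal.ofReal_le_ofReal (hmain m e f he hf)
  have htne : traceNorm T ≠ ⊤ := ne_top_of_le_ne_top ENNReal.ofReal_ne_top htn
  -- the trace
  have hbi : ∀ i, ‖(b i : H)‖ = 1 := fun i => b.orthonormal.1 i
  set g : ℕ → ι → ℝ := fun n i => p n * ‖(inner ℂ (ψ n) (b i) : ℂ)‖ ^ 2 with hgdef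
  have hterm : ∀ n i,
      p n • ((inner ℂ (ψ n) (b i) : ℂ) * (inner ℂ (b i) (ψ n) : ℂ)) = ((g n i : ℝ) : ℂ) := by
    intro n i
    rw [← inner_conj_symm (b i) (ψ n), Complex.mul_conj, hgdef]
    simp [Complex.real_smul, Complex.normSq_eq_norm_sq]
  have hasum : ∀ i, HasSum (fun n => ((g n i : ℝ) : ℂ)) (inner ℂ (b i) (T (b i)) : ℂ) := by
    intro i
    exact (hTin (b i) (b i)).congr_fun fun n => (hterm n i).symm
  have hgsummable : ∀ i, Summable fun n => g n i := by
    intro i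
    refine Summable.of_nonneg_of_le
      (fun n => mul_nonneg (hp n) (sq_nonneg _)) (fun n => ?_) hC
    refine mul_le_mul_of_nonneg_left ?_ (hp n)
    refine pow_le_pow_left₀ (norm_nonneg _) ?_ 2
    calc ‖(inner ℂ (ψ n) (b i) : ℂ)‖ ≤ ‖ψ n‖ * ‖(b i : H)‖ := norm_inner_le_norm _ _
      _ = ‖ψ n‖ := by rw [hbi i, mul_one]
  set s : ι → ℝ := fun i => ∑' n, g n i with hsdef
  have hsreal : ∀ i, HasSum (fun n => g n i) (s i) := fun i => (hgsummable i).hasSum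
  have hbParseval : ∀ n, HasSum (fun i => g n i) (p n * ‖ψ n‖ ^ 2) := by
    intro n
    have h := (b.hasSum_inner_mul_inner (ψ n) (ψ n)).mapL Complex.reCLM
    have h2 : ∀ i, (((inner ℂ (ψ n) (b i) : ℂ) * (inner ℂ (b i) (ψ n) : ℂ))).re
        = ‖(inner ℂ (ψ n) (b i) : ℂ)‖ ^ 2 := by
      intro i
      rw [← inner_conj_symm (b i) (ψ n), Complex.mul_conj, Complex.ofReal_re,
        Complex.normSq_eq_norm_sq]
    have h3 : ((inner ℂ (ψ n) (ψ n) : ℂ)).re = ‖ψ n‖ ^ 2 := by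
      exact inner_self_eq_norm_sq (𝕜 := ℂ) (ψ n)
    simp only [Complex.reCLM_apply] at h
    have h4 : HasSum (fun i => ‖(inner ℂ (ψ n) (b i) : ℂ)‖ ^ 2) (‖ψ n‖ ^ 2) := by
      rw [← h3]
      exact h.congr_fun fun i => (h2 i).symm
    simpa [hgdef] using h4.mul_left (p n)
  have hprod : Summable (fun x : ℕ × ι => g x.1 x.2) := by
    refine (summable_prod_of_nonneg fun x => mul_nonneg (hp x.1) (sq_nonneg _)).mpr
      ⟨fun n => (hbParseval n).summable, ?_⟩
    exact hC.congr fun n => ((hbParseval n).tsum_eq).symm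
  have htot : HasSum (fun x : ℕ × ι => g x.1 x.2) M := by
    have h1 := hprod.hasSum
    have h2 := h1.prod_fiberwise hbParseval
    rwa [h2.unique hC.hasSum] at h1
  have htot' : HasSum (fun x : ι × ℕ => g x.2 x.1) M :=
    (Equiv.prodComm ι ℕ).hasSum_iff.mpr htot
  have hS : HasSum s M := htot'.prod_fiberwise hsreal
  have hval : ∀ i, (inner ℂ (b i) (T (b i)) : ℂ) = ((s i : ℝ) : ℂ) := fun i =>
    (hasum i).unique ((hsreal i).mapL Complex.ofRealCLM)
  refine ⟨T, hgraph, huniq, htne, ?_⟩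
  exact ((hS.mapL Complex.ofRealCLM).congr_fun fun i => hval i).tsum_eq
end

section
/- Let H be a Hilbert space and (x_t)_{t ∈ I} a family in L²(ℕ; H) indexed by an interval I such that ‖x_t‖ = 1 for every t and for each n ∈ ℕ the map t ↦ x_t(n) ∈ H is continuous. Then t ↦ x_t is continuous from I into L²(ℕ; H) (with the norm topology). -/
open Filter Topology

variable {H : Type*} [NormedAddCommGroup H] [InnerProductSpace ℂ H] [CompleteSpace H]

/-- Let `(x_t)_{t ∈ I}` be a family in `L²(ℕ; H)` indexed by an interval `I ⊆ ℝ` such that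
`‖x_t‖ = 1` for every `t ∈ I` and each coordinate map `t ↦ x_t(n)` is continuous on `I`.
Then `t ↦ x_t` is continuous on `I` for the norm topology of `L²(ℕ; H)`. -/
theorem stmt_13 (I : Set ℝ) (hI : I.OrdConnected)
    (x : ℝ → lp (fun _ : ℕ => H) 2)
    (hnorm : ∀ t ∈ I, ‖x t‖ = 1)
    (hcoord : ∀ n : ℕ, ContinuousOn (fun t => (x t : ∀ _ : ℕ, H) n) I) :
    ContinuousOn x I := by
  intro t₀ ht₀
  set g : ℝ → ℂ := fun t => inner (𝕜 := ℂ) (x t₀) (x t) with hg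
  set F : Finset ℕ → ℝ → ℂ := fun s t =>
    ∑ n ∈ s, (inner (𝕜 := ℂ) ((x t₀ : ∀ _ : ℕ, H) n) ((x t : ∀ _ : ℕ, H) n) : ℂ) with hF
  -- uniform convergence of the partial sums to g on I
  have hunif : TendstoUniformlyOn F g atTop I := by
    rw [Metric.tendstoUniformlyOn_iff]
    intro ε hε
    have hsum : Tendsto (fun s : Finset ℕ => ∑ n ∈ s, lp.single 2 n ((x t₀ : ∀ _ : ℕ, H) n))
        atTop (𝓝 (x t₀)) :=
      (lp.hasSum_single (by norm_num) (x t₀))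
    have := (hsum.const_sub (x t₀)).norm
    simp only [sub_self, norm_zero] at this
    filter_upwards [this.eventually (gt_mem_nhds hε)] with s hs t ht
    have key : g t - F s t =
        inner (𝕜 := ℂ) (x t₀ - ∑ n ∈ s, lp.single 2 n ((x t₀ : ∀ _ : ℕ, H) n)) (x t) := by
      rw [inner_sub_left, sum_inner]
      simp only [lp.inner_single_left, hg, hF]
    rw [dist_eq_norm, key]
    calc ‖inner (𝕜 := ℂ) (x t₀ - ∑ n ∈ s, lp.single 2 n ((x t₀ : ∀ _ : ℕ, H) n)) (x t)‖
        ≤ ‖x t₀ - ∑ n ∈ s, lp.single 2 n ((x t₀ : ∀ _ : ℕ, H) n)‖ * ‖x t‖ := norm_inner_le_norm _ _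
      _ = ‖x t₀ - ∑ n ∈ s, lp.single 2 n ((x t₀ : ∀ _ : ℕ, H) n)‖ := by rw [hnorm t ht, mul_one]
      _ < ε := hs
  have hFc : ∀ s : Finset ℕ, ContinuousOn (F s) I := fun s =>
    continuousOn_finset_sum s fun n _ => continuousOn_const.inner (hcoord n)
  have hgcont : ContinuousOn g I := hunif.continuousOn (Eventually.of_forall hFc).frequently
  -- value of g at t₀
  have hg0 : g t₀ = 1 := by
    show (inner (𝕜 := ℂ) (x t₀) (x t₀)) = 1
    rw [inner_self_eq_norm_sq_to_K, hnorm t₀ ht₀]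
    norm_num
  have hgt : Tendsto g (𝓝[I] t₀) (𝓝 1) := by
    have := hgcont t₀ ht₀
    rwa [ContinuousWithinAt, hg0] at this
  have hre : Tendsto (fun t => (g t).re) (𝓝[I] t₀) (𝓝 1) := by
    have := (Complex.continuous_re.tendsto 1).comp hgt
    simpa [Function.comp_def] using this
  -- norm squared tends to 0
  have hsq : Tendsto (fun t => ‖x t - x t₀‖ ^ 2) (𝓝[I] t₀) (𝓝 0) := by
    have hbase : Tendsto (fun t => 2 - 2 * (g t).re) (𝓝[I] t₀) (𝓝 0) := by
      have := ((tendsto_const_nhds (x := (2:ℝ))).sub (hre.const_mul 2))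
      simpa using this
    refine hbase.congr' ?_
    filter_upwards [self_mem_nhdsWithin] with t ht
    have h1 : ‖x t - x t₀‖ ^ 2 = ‖x t‖ ^ 2 - 2 * RCLike.re (inner (𝕜 := ℂ) (x t) (x t₀)) +
        ‖x t₀‖ ^ 2 := @norm_sub_sq ℂ _ _ _ _ (x t) (x t₀)
    have h2 : (inner (𝕜 := ℂ) (x t) (x t₀)) = starRingEnd ℂ (g t) := by
      rw [hg, inner_conj_symm]
    rw [h1, h2, hnorm t ht, hnorm t₀ ht₀]
    simp [Complex.conj_re]
    ring
  have hnorm0 : Tendsto (fun t => ‖x t - x t₀‖) (𝓝[I] t₀) (𝓝 0) := by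
    have := (Real.continuous_sqrt.tendsto 0).comp hsq
    simpa [Function.comp_def, Real.sqrt_sq (norm_nonneg _)] using this
  exact tendsto_iff_norm_sub_tendsto_zero.mpr hnorm0
end

section
/- Let A be a bounded operator on a Hilbert space H and let G be a linear operator with D(C) ⊆ D(G) for a self-adjoint nonnegative C satisfying ‖Gx‖² ≤ K(‖x‖² + ‖Cx‖²) on D(C). Let (xₙ) ⊂ D(C) with ∑ₙ(‖xₙ‖² + ‖Cxₙ‖²) < ∞ and ∑ₙ ‖xₙ‖² ≤ 1, and let ρ = ∑ₙ |xₙ⟩⟨xₙ|. Then the trace-class norm of the bounded extension of Gρ satisfies ‖Gρ‖₁ ≤ (∑ₙ ‖G xₙ‖²)^{1/2} ≤ √K (1 + (∑ₙ ‖C xₙ‖²)^{1/2}). -/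
open Filter Topology
open scoped ENNReal NNReal

variable {H : Type*} [NormedAddCommGroup H] [InnerProductSpace ℂ H] [CompleteSpace H]

/-- Let `A` be a bounded operator on `H` and `G` a linear operator with `D(C) ⊆ D(G)` for
a self-adjoint nonnegative `C` satisfying `‖G x‖² ≤ K (‖x‖² + ‖C x‖²)` on `D(C)`.  Let
`(xₙ) ⊆ D(C)` with `∑ₙ (‖xₙ‖² + ‖C xₙ‖²) < ∞` and `∑ₙ ‖xₙ‖² ≤ 1`, and `ρ = ∑ₙ |xₙ⟩⟨xₙ|`.
Then the trace norm of the bounded extension `T = ∑ₙ |G xₙ⟩⟨xₙ|` of `G ρ` satisfies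
`‖G ρ‖₁ ≤ (∑ₙ ‖G xₙ‖²)^{1/2} ≤ √K (1 + (∑ₙ ‖C xₙ‖²)^{1/2})`. -/
theorem stmt_19 [TopologicalSpace.SeparableSpace H]
    (A : H →L[ℂ] H)
    (C : H →ₗ.[ℂ] H)
    (hsa : IsSelfAdjoint C)
    (hnn : ∀ u : C.domain, 0 ≤ (inner ℂ ((u : H)) (C u) : ℂ).re)
    (G : H →ₗ.[ℂ] H) (hGdom : C.domain ≤ G.domain)
    (K : ℝ) (hK : 0 ≤ K)
    (hGb : ∀ u : C.domain, ‖G ⟨(u : H), hGdom u.2⟩‖ ^ 2 ≤ K * (‖(u : H)‖ ^ 2 + ‖C u‖ ^ 2))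
    (x : ℕ → C.domain)
    (hx1 : Summable fun n => ‖(x n : H)‖ ^ 2 + ‖C (x n)‖ ^ 2)
    (hx2 : ∑' n, ‖(x n : H)‖ ^ 2 ≤ 1)
    (ρ : H →L[ℂ] H) (hρ : HasSum (fun n => rankOne ((x n : H)) ((x n : H))) ρ)
    (T : H →L[ℂ] H)
    (hT : HasSum (fun n => rankOne (G ⟨(x n : H), hGdom (x n).2⟩) ((x n : H))) T) :
    traceNorm T ≤
      ENNReal.ofReal (Real.sqrt (∑' n, ‖G ⟨(x n : H), hGdom (x n).2⟩‖ ^ 2)) ∧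
    Real.sqrt (∑' n, ‖G ⟨(x n : H), hGdom (x n).2⟩‖ ^ 2) ≤
      Real.sqrt K * (1 + Real.sqrt (∑' n, ‖C (x n)‖ ^ 2)) := by
  set g : ℕ → H := fun n => G ⟨(x n : H), hGdom (x n).2⟩ with hgdef
  have hs1 : Summable fun n => ‖(x n : H)‖ ^ 2 :=
    hx1.of_nonneg_of_le (fun n => by positivity)
      (fun n => by nlinarith [sq_nonneg ‖C (x n)‖])
  have hs2 : Summable fun n => ‖C (x n)‖ ^ 2 :=
    hx1.of_nonneg_of_le (fun n => by positivity)
      (fun n => by nlinarith [sq_nonneg ‖(x n : H)‖])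
  have hsg : Summable fun n => ‖g n‖ ^ 2 :=
    (hx1.mul_left K).of_nonneg_of_le (fun n => by positivity) (fun n => hGb (x n))
  have hS2nn : (0:ℝ) ≤ ∑' n, ‖C (x n)‖ ^ 2 := tsum_nonneg fun n => by positivity
  -- Part 2
  have h2 : Real.sqrt (∑' n, ‖g n‖ ^ 2) ≤
      Real.sqrt K * (1 + Real.sqrt (∑' n, ‖C (x n)‖ ^ 2)) := by
    set S2 := ∑' n, ‖C (x n)‖ ^ 2 with hS2def
    have hsum : (∑' n, ‖g n‖ ^ 2) ≤ K * (1 + S2) := by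
      have h1 : (∑' n, ‖g n‖ ^ 2) ≤ ∑' n, K * (‖(x n : H)‖ ^ 2 + ‖C (x n)‖ ^ 2) :=
        Summable.tsum_le_tsum (fun n => hGb (x n)) hsg (hx1.mul_left K)
      have h2' : (∑' n, K * (‖(x n : H)‖ ^ 2 + ‖C (x n)‖ ^ 2))
          = K * ((∑' n, ‖(x n : H)‖ ^ 2) + S2) := by
        rw [tsum_mul_left, Summable.tsum_add hs1 hs2]
      have h3 : K * ((∑' n, ‖(x n : H)‖ ^ 2) + S2) ≤ K * (1 + S2) := by
        apply mul_le_mul_of_nonneg_left _ hK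
        linarith
      linarith [h1, h2'.le, h2'.ge]
    have hsq : K * (1 + S2) ≤ K * (1 + Real.sqrt S2) ^ 2 := by
      have h := Real.sq_sqrt hS2nn
      have h' := Real.sqrt_nonneg S2
      nlinarith
    calc Real.sqrt (∑' n, ‖g n‖ ^ 2)
        ≤ Real.sqrt (K * (1 + Real.sqrt S2) ^ 2) := Real.sqrt_le_sqrt (hsum.trans hsq)
      _ = Real.sqrt K * (1 + Real.sqrt S2) := by
          rw [Real.sqrt_mul hK, Real.sqrt_sq (by positivity)]
  refine ⟨?_, h2⟩
  -- Part 1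
  set M := Real.sqrt (∑' n, ‖g n‖ ^ 2) with hMdef
  have hMnn : 0 ≤ M := Real.sqrt_nonneg _
  rw [traceNorm]
  refine iSup_le fun m => iSup_le fun e => iSup_le fun f => iSup_le fun he =>
    iSup_le fun hf => ?_
  have hprod : Summable fun n => ‖(x n : H)‖ * ‖g n‖ :=
    ((hs1.add hsg).mul_left (1/2 : ℝ)).of_nonneg_of_le (fun n => by positivity)
      (fun n => by nlinarith [sq_nonneg (‖(x n : H)‖ - ‖g n‖)])
  have hpk : ∀ k : Fin m, Summable fun n =>
      ‖(inner ℂ ((x n : H)) (f k) : ℂ)‖ * ‖(inner ℂ (e k) (g n) : ℂ)‖ := by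
    intro k
    refine hprod.of_nonneg_of_le (fun n => by positivity) (fun n => ?_)
    have h1 : ‖(inner ℂ ((x n : H)) (f k) : ℂ)‖ ≤ ‖(x n : H)‖ := by
      simpa only [hf.1 k, mul_one] using norm_inner_le_norm (𝕜 := ℂ) ((x n : H)) (f k)
    have h2' : ‖(inner ℂ (e k) (g n) : ℂ)‖ ≤ ‖g n‖ := by
      simpa only [he.1 k, one_mul] using norm_inner_le_norm (𝕜 := ℂ) (e k) (g n)
    exact mul_le_mul h1 h2' (norm_nonneg _) (norm_nonneg _)
  have hTk : ∀ k : Fin m, HasSum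
      (fun n => (inner ℂ ((x n : H)) (f k) : ℂ) * (inner ℂ (e k) (g n) : ℂ))
      ((inner ℂ (e k) (T (f k)) : ℂ)) := by
    intro k
    have h1 := (hT.mapL (ContinuousLinearMap.apply ℂ H (f k))).mapL (innerSL ℂ (e k))
    simpa [rankOne, inner_smul_right, mul_comm, Function.comp] using h1
  have hk_le : ∀ k : Fin m, ‖(inner ℂ (e k) (T (f k)) : ℂ)‖ ≤
      ∑' n, ‖(inner ℂ ((x n : H)) (f k) : ℂ)‖ * ‖(inner ℂ (e k) (g n) : ℂ)‖ := by
    intro k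
    rw [← (hTk k).tsum_eq]
    calc ‖∑' n, (inner ℂ ((x n : H)) (f k) : ℂ) * (inner ℂ (e k) (g n) : ℂ)‖
        ≤ ∑' n, ‖(inner ℂ ((x n : H)) (f k) : ℂ) * (inner ℂ (e k) (g n) : ℂ)‖ :=
          norm_tsum_le_tsum_norm (by simpa [norm_mul] using hpk k)
      _ = ∑' n, ‖(inner ℂ ((x n : H)) (f k) : ℂ)‖ * ‖(inner ℂ (e k) (g n) : ℂ)‖ := by
          simp [norm_mul]
  have hnbound : ∀ n, (∑ k : Fin m, ‖(inner ℂ ((x n : H)) (f k) : ℂ)‖ *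
      ‖(inner ℂ (e k) (g n) : ℂ)‖) ≤ ‖(x n : H)‖ * ‖g n‖ := by
    intro n
    have hb1 : (∑ k : Fin m, ‖(inner ℂ ((x n : H)) (f k) : ℂ)‖ ^ 2) ≤ ‖(x n : H)‖ ^ 2 := by
      have := hf.sum_inner_products_le (s := Finset.univ) ((x n : H))
      simpa [norm_inner_symm ((x n : H))] using this
    have hb2 : (∑ k : Fin m, ‖(inner ℂ (e k) (g n) : ℂ)‖ ^ 2) ≤ ‖g n‖ ^ 2 :=
      he.sum_inner_products_le (s := Finset.univ) (g n)
    calc (∑ k : Fin m, ‖(inner ℂ ((x n : H)) (f k) : ℂ)‖ * ‖(inner ℂ (e k) (g n) : ℂ)‖)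
        ≤ Real.sqrt (∑ k : Fin m, ‖(inner ℂ ((x n : H)) (f k) : ℂ)‖ ^ 2) *
          Real.sqrt (∑ k : Fin m, ‖(inner ℂ (e k) (g n) : ℂ)‖ ^ 2) :=
          Real.sum_mul_le_sqrt_mul_sqrt _ _ _
      _ ≤ Real.sqrt (‖(x n : H)‖ ^ 2) * Real.sqrt (‖g n‖ ^ 2) :=
          mul_le_mul (Real.sqrt_le_sqrt hb1) (Real.sqrt_le_sqrt hb2)
            (Real.sqrt_nonneg _) (Real.sqrt_nonneg _)
      _ = ‖(x n : H)‖ * ‖g n‖ := by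
          rw [Real.sqrt_sq (norm_nonneg _), Real.sqrt_sq (norm_nonneg _)]
  have hCS : (∑' n, ‖(x n : H)‖ * ‖g n‖) ≤ M := by
    refine Summable.tsum_le_of_sum_le hprod fun s => ?_
    calc (∑ n ∈ s, ‖(x n : H)‖ * ‖g n‖)
        ≤ Real.sqrt (∑ n ∈ s, ‖(x n : H)‖ ^ 2) * Real.sqrt (∑ n ∈ s, ‖g n‖ ^ 2) :=
          Real.sum_mul_le_sqrt_mul_sqrt _ _ _
      _ ≤ Real.sqrt (∑' n, ‖(x n : H)‖ ^ 2) * Real.sqrt (∑' n, ‖g n‖ ^ 2) :=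
          mul_le_mul (Real.sqrt_le_sqrt (Summable.sum_le_tsum s (fun n _ => by positivity) hs1))
            (Real.sqrt_le_sqrt (Summable.sum_le_tsum s (fun n _ => by positivity) hsg))
            (Real.sqrt_nonneg _) (Real.sqrt_nonneg _)
      _ ≤ 1 * M := mul_le_mul_of_nonneg_right (Real.sqrt_le_one.2 hx2) hMnn
      _ = M := one_mul M
  have hreal : (∑ k : Fin m, ‖(inner ℂ (e k) (T (f k)) : ℂ)‖) ≤ M := by
    calc (∑ k : Fin m, ‖(inner ℂ (e k) (T (f k)) : ℂ)‖)
        ≤ ∑ k : Fin m, ∑' n, ‖(inner ℂ ((x n : H)) (f k) : ℂ)‖ *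
            ‖(inner ℂ (e k) (g n) : ℂ)‖ := Finset.sum_le_sum fun k _ => hk_le k
      _ = ∑' n, ∑ k : Fin m, ‖(inner ℂ ((x n : H)) (f k) : ℂ)‖ *
            ‖(inner ℂ (e k) (g n) : ℂ)‖ := (Summable.tsum_finsetSum fun k _ => hpk k).symm
      _ ≤ ∑' n, ‖(x n : H)‖ * ‖g n‖ :=
          Summable.tsum_le_tsum hnbound (summable_sum fun k _ => hpk k) hprod
      _ ≤ M := hCS
  calc (∑ k : Fin m, ((‖(inner ℂ (e k) (T (f k)) : ℂ)‖₊ : ℝ≥0∞)))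
      = ENNReal.ofReal (∑ k : Fin m, ‖(inner ℂ (e k) (T (f k)) : ℂ)‖) := by
        rw [ENNReal.ofReal_sum_of_nonneg (fun k _ => norm_nonneg _)]
        exact Finset.sum_congr rfl fun k _ => by rw [ofReal_norm, enorm_eq_nnnorm]
    _ ≤ ENNReal.ofReal M := ENNReal.ofReal_le_ofReal hreal
end
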